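/- For a fixed composition c of total size s = |c|, the generating function of pairs (a, marked occurrence) where a is a composition containing a marked run of exactly k consecutive copies of c (preceded and followed by composition segments not ending/starting with c) is F(z) = (1-z)^2 (1-z^s)^2 z^{ks} (1-2z)^{-2}. -/

import Mathlib

open PowerSeries

/-- The number of pairs `(u, v)` of compositions with `u` not ending with the
block `c`, `v` not starting with the block `c`, and total size
`u.sum + k * c.sum + v.sum = n`.  Such a pair encodes a composition
`u ++ c^k ++ v` with a marked run of exactly `k` consecutive copies of `c`. -/
noncomputable def markedRunCount (c : List ℕ) (k n : ℕ) : ℕ :=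
  {uv : List ℕ × List ℕ |
      (∀ p ∈ uv.1, 0 < p) ∧ (∀ p ∈ uv.2, 0 < p) ∧
      ¬ c <:+ uv.1 ∧ ¬ c <+: uv.2 ∧
      uv.1.sum + k * c.sum + uv.2.sum = n}.ncard

namespace MarkedRunAux

lemma finite_comp (n : ℕ) : {l : List ℕ | (∀ p ∈ l, 0 < p) ∧ l.sum = n}.Finite := by
  apply Set.Finite.subset (Set.finite_range (Composition.blocks (n := n)))
  rintro l ⟨h1, h2⟩
  exact ⟨⟨l, fun {i} hi => h1 i hi, h2⟩, rfl⟩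

lemma finiteP (n : ℕ) (P : List ℕ → Prop) :
    Finite {l : List ℕ // (∀ p ∈ l, 0 < p) ∧ P l ∧ l.sum = n} := by
  have h : {l : List ℕ | (∀ p ∈ l, 0 < p) ∧ P l ∧ l.sum = n}.Finite :=
    (finite_comp n).subset (fun l hl => ⟨hl.1, hl.2.2⟩)
  exact h.to_subtype

lemma finite0 (n : ℕ) : Finite {l : List ℕ // (∀ p ∈ l, 0 < p) ∧ l.sum = n} :=
  (finite_comp n).to_subtype

/-- The number of compositions of `n`. -/
noncomputable def cc (n : ℕ) : ℕ :=
  Nat.card {l : List ℕ // (∀ p ∈ l, 0 < p) ∧ l.sum = n}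

lemma cc_eq (n : ℕ) : cc n = 2 ^ (n - 1) := by
  have e : Composition n ≃ {l : List ℕ // (∀ p ∈ l, 0 < p) ∧ l.sum = n} :=
    { toFun := fun x => ⟨x.blocks, fun p hp => x.blocks_pos hp, x.blocks_sum⟩
      invFun := fun x => ⟨x.1, fun {i} hi => x.2.1 i hi, x.2.2⟩
      left_inv := fun x => rfl
      right_inv := fun x => rfl }
  rw [cc, ← Nat.card_congr e, Nat.card_eq_fintype_card, composition_card]

lemma card_split (n : ℕ) (Q : List ℕ → Prop) :
    Nat.card {l : List ℕ // (∀ p ∈ l, 0 < p) ∧ ¬ Q l ∧ l.sum = n}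
      + Nat.card {l : List ℕ // (∀ p ∈ l, 0 < p) ∧ Q l ∧ l.sum = n} = cc n := by
  classical
  haveI := finiteP n (fun l => ¬ Q l)
  haveI := finiteP n Q
  have e : {l : List ℕ // (∀ p ∈ l, 0 < p) ∧ ¬ Q l ∧ l.sum = n}
      ⊕ {l : List ℕ // (∀ p ∈ l, 0 < p) ∧ Q l ∧ l.sum = n}
      ≃ {l : List ℕ // (∀ p ∈ l, 0 < p) ∧ l.sum = n} :=
    { toFun := Sum.elim (fun x => ⟨x.1, x.2.1, x.2.2.2⟩) (fun x => ⟨x.1, x.2.1, x.2.2.2⟩)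
      invFun := fun x => if h : Q x.1 then .inr ⟨x.1, x.2.1, h, x.2.2⟩
        else .inl ⟨x.1, x.2.1, h, x.2.2⟩
      left_inv := by rintro (⟨l, h1, h2, h3⟩ | ⟨l, h1, h2, h3⟩) <;> simp [h2]
      right_inv := by rintro ⟨l, h1, h2⟩; by_cases h : Q l <;> simp [h] }
  rw [cc, ← Nat.card_congr e, Nat.card_sum]

lemma endC_eq (c : List ℕ) (hpos : ∀ p ∈ c, 0 < p) (n : ℕ) :
    Nat.card {l : List ℕ // (∀ p ∈ l, 0 < p) ∧ c <:+ l ∧ l.sum = n}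
      = if c.sum ≤ n then cc (n - c.sum) else 0 := by
  split_ifs with h
  · refine (Nat.card_eq_of_bijective
      (fun u : {u : List ℕ // (∀ p ∈ u, 0 < p) ∧ u.sum = n - c.sum} =>
        (⟨u.1 ++ c, fun p hp => ((List.mem_append.1 hp).elim (u.2.1 p) (hpos p)),
          ⟨u.1, rfl⟩, by rw [List.sum_append, u.2.2]; omega⟩ :
          {l : List ℕ // (∀ p ∈ l, 0 < p) ∧ c <:+ l ∧ l.sum = n})) ⟨?_, ?_⟩).symm
    · intro a b hab
      exact Subtype.ext (List.append_cancel_right (congrArg Subtype.val hab))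
    · rintro ⟨l, h1, ⟨u, rfl⟩, h3⟩
      rw [List.sum_append] at h3
      exact ⟨⟨u, fun p hp => h1 p (List.mem_append_left _ hp), by omega⟩, rfl⟩
  · haveI : IsEmpty {l : List ℕ // (∀ p ∈ l, 0 < p) ∧ c <:+ l ∧ l.sum = n} := by
      constructor
      rintro ⟨l, h1, ⟨u, rfl⟩, h3⟩
      rw [List.sum_append] at h3
      omega
    exact Nat.card_of_isEmpty

lemma startC_eq (c : List ℕ) (hpos : ∀ p ∈ c, 0 < p) (n : ℕ) :
    Nat.card {l : List ℕ // (∀ p ∈ l, 0 < p) ∧ c <+: l ∧ l.sum = n}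
      = if c.sum ≤ n then cc (n - c.sum) else 0 := by
  split_ifs with h
  · refine (Nat.card_eq_of_bijective
      (fun u : {u : List ℕ // (∀ p ∈ u, 0 < p) ∧ u.sum = n - c.sum} =>
        (⟨c ++ u.1, fun p hp => ((List.mem_append.1 hp).elim (hpos p) (u.2.1 p)),
          ⟨u.1, rfl⟩, by rw [List.sum_append, u.2.2]; omega⟩ :
          {l : List ℕ // (∀ p ∈ l, 0 < p) ∧ c <+: l ∧ l.sum = n})) ⟨?_, ?_⟩).symm
    · intro a b hab
      exact Subtype.ext (List.append_cancel_left (congrArg Subtype.val hab))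
    · rintro ⟨l, h1, ⟨u, rfl⟩, h3⟩
      rw [List.sum_append] at h3
      exact ⟨⟨u, fun p hp => h1 p (List.mem_append_right _ hp), by omega⟩, rfl⟩
  · haveI : IsEmpty {l : List ℕ // (∀ p ∈ l, 0 < p) ∧ c <+: l ∧ l.sum = n} := by
      constructor
      rintro ⟨l, h1, ⟨u, rfl⟩, h3⟩
      rw [List.sum_append] at h3
      omega
    exact Nat.card_of_isEmpty

lemma nat_card_sigma {ι : Type*} [Fintype ι] (f : ι → Type*) [hf : ∀ i, Finite (f i)] :
    Nat.card (Σ i, f i) = ∑ i, Nat.card (f i) := by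
  letI : ∀ i, Fintype (f i) := fun i => Fintype.ofFinite _
  simp [Nat.card_eq_fintype_card, Fintype.card_sigma]

lemma conv_count (c : List ℕ) (k n : ℕ) :
    markedRunCount c k n =
      if k * c.sum ≤ n then
        ∑ ij ∈ Finset.HasAntidiagonal.antidiagonal (n - k * c.sum),
          Nat.card {u : List ℕ // (∀ p ∈ u, 0 < p) ∧ ¬ c <:+ u ∧ u.sum = ij.1} *
            Nat.card {v : List ℕ // (∀ p ∈ v, 0 < p) ∧ ¬ c <+: v ∧ v.sum = ij.2}
      else 0 := by
  rw [markedRunCount, ← Nat.card_coe_set_eq]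
  show Nat.card {uv : List ℕ × List ℕ //
      (∀ p ∈ uv.1, 0 < p) ∧ (∀ p ∈ uv.2, 0 < p) ∧
      ¬ c <:+ uv.1 ∧ ¬ c <+: uv.2 ∧ uv.1.sum + k * c.sum + uv.2.sum = n} = _
  split_ifs with h
  · set m := n - k * c.sum with hm
    have e : {uv : List ℕ × List ℕ //
        (∀ p ∈ uv.1, 0 < p) ∧ (∀ p ∈ uv.2, 0 < p) ∧
        ¬ c <:+ uv.1 ∧ ¬ c <+: uv.2 ∧ uv.1.sum + k * c.sum + uv.2.sum = n}
        ≃ Σ i : Fin (m + 1),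
            {u : List ℕ // (∀ p ∈ u, 0 < p) ∧ ¬ c <:+ u ∧ u.sum = (i : ℕ)} ×
            {v : List ℕ // (∀ p ∈ v, 0 < p) ∧ ¬ c <+: v ∧ v.sum = m - (i : ℕ)} :=
      { toFun := fun x => ⟨⟨x.1.1.sum, by have := x.2.2.2.2.2; omega⟩,
          ⟨x.1.1, x.2.1, x.2.2.2.1, rfl⟩,
          ⟨x.1.2, x.2.2.1, x.2.2.2.2.1, by have := x.2.2.2.2.2; simp only []; omega⟩⟩
        invFun := fun y => ⟨(y.2.1.1, y.2.2.1), y.2.1.2.1, y.2.2.2.1, y.2.1.2.2.1,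
          y.2.2.2.2.1, by
            show y.2.1.1.sum + k * c.sum + y.2.2.1.sum = n
            have h1 := y.2.1.2.2.2
            have h2 := y.2.2.2.2.2
            have h3 := y.1.2
            omega⟩
        left_inv := fun x => rfl
        right_inv := by
          rintro ⟨⟨i, hi⟩, ⟨u, hu1, hu2, hu3⟩, ⟨v, hv1, hv2, hv3⟩⟩
          simp only [Fin.val_mk] at hu3
          subst hu3
          rfl }
    haveI : ∀ i : Fin (m + 1),
        Finite ({u : List ℕ // (∀ p ∈ u, 0 < p) ∧ ¬ c <:+ u ∧ u.sum = (i : ℕ)} ×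
          {v : List ℕ // (∀ p ∈ v, 0 < p) ∧ ¬ c <+: v ∧ v.sum = m - (i : ℕ)}) := fun i => by
      haveI : Finite {u : List ℕ // (∀ p ∈ u, 0 < p) ∧ ¬ c <:+ u ∧ u.sum = (i : ℕ)} :=
        finiteP _ _
      haveI : Finite {v : List ℕ // (∀ p ∈ v, 0 < p) ∧ ¬ c <+: v ∧ v.sum = m - (i : ℕ)} :=
        finiteP _ _
      exact inferInstance
    rw [Nat.card_congr e, nat_card_sigma, Finset.Nat.sum_antidiagonal_eq_sum_range_succ_mk,
      ← Fin.sum_univ_eq_sum_range]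
    exact Finset.sum_congr rfl (fun i _ => Nat.card_prod _ _)
  · haveI : IsEmpty {uv : List ℕ × List ℕ //
        (∀ p ∈ uv.1, 0 < p) ∧ (∀ p ∈ uv.2, 0 < p) ∧
        ¬ c <:+ uv.1 ∧ ¬ c <+: uv.2 ∧ uv.1.sum + k * c.sum + uv.2.sum = n} :=
      ⟨fun x => by have := x.2.2.2.2.2; omega⟩
    exact Nat.card_of_isEmpty

lemma hP : (PowerSeries.mk fun n => (cc n : ℚ)) * (1 - 2 * X) = 1 - X := by
  ext n
  have expand : (PowerSeries.mk fun n => (cc n : ℚ)) * (1 - 2 * X)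
      = (PowerSeries.mk fun n => (cc n : ℚ))
        - 2 * ((PowerSeries.mk fun n => (cc n : ℚ)) * X) := by ring
  rw [expand, map_sub]
  cases n with
  | zero => simp [cc_eq]
  | succ n =>
    rw [two_mul, map_add, coeff_succ_mul_X, ← two_mul]
    simp only [coeff_mk, map_sub, coeff_one, coeff_X]
    rw [cc_eq, cc_eq]
    cases n with
    | zero => norm_num
    | succ n =>
      simp only [Nat.add_sub_cancel, Nat.succ_ne_zero, if_false]
      have hne : ¬ (n + 1 + 1 = 1) := by omega
      rw [if_neg hne]
      push_cast
      ring

lemma hA (c : List ℕ) (hpos : ∀ p ∈ c, 0 < p) :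
    (PowerSeries.mk fun n =>
        (Nat.card {u : List ℕ // (∀ p ∈ u, 0 < p) ∧ ¬ c <:+ u ∧ u.sum = n} : ℚ))
      = (1 - X ^ c.sum) * PowerSeries.mk fun n => (cc n : ℚ) := by
  ext n
  rw [coeff_mk, sub_mul, one_mul, map_sub, coeff_X_pow_mul']
  simp only [coeff_mk]
  have h1 : Nat.card {u : List ℕ // (∀ p ∈ u, 0 < p) ∧ ¬ c <:+ u ∧ u.sum = n}
      + Nat.card {l : List ℕ // (∀ p ∈ l, 0 < p) ∧ c <:+ l ∧ l.sum = n} = cc n :=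
    card_split n (fun l => c <:+ l)
  have h2 := endC_eq c hpos n
  have h1q : (Nat.card {u : List ℕ // (∀ p ∈ u, 0 < p) ∧ ¬ c <:+ u ∧ u.sum = n} : ℚ)
      + (Nat.card {l : List ℕ // (∀ p ∈ l, 0 < p) ∧ c <:+ l ∧ l.sum = n} : ℚ)
      = (cc n : ℚ) := by exact_mod_cast congrArg (Nat.cast : ℕ → ℚ) h1
  have h2q : (Nat.card {l : List ℕ // (∀ p ∈ l, 0 < p) ∧ c <:+ l ∧ l.sum = n} : ℚ)
      = if c.sum ≤ n then (cc (n - c.sum) : ℚ) else 0 := by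
    rw [h2]; split_ifs <;> simp
  rw [h2q] at h1q
  linarith
  
lemma hB (c : List ℕ) (hpos : ∀ p ∈ c, 0 < p) :
    (PowerSeries.mk fun n =>
        (Nat.card {v : List ℕ // (∀ p ∈ v, 0 < p) ∧ ¬ c <+: v ∧ v.sum = n} : ℚ))
      = (1 - X ^ c.sum) * PowerSeries.mk fun n => (cc n : ℚ) := by
  ext n
  rw [coeff_mk, sub_mul, one_mul, map_sub, coeff_X_pow_mul']
  simp only [coeff_mk]
  have h1 : Nat.card {v : List ℕ // (∀ p ∈ v, 0 < p) ∧ ¬ c <+: v ∧ v.sum = n}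
      + Nat.card {l : List ℕ // (∀ p ∈ l, 0 < p) ∧ c <+: l ∧ l.sum = n} = cc n :=
    card_split n (fun l => c <+: l)
  have h2 := startC_eq c hpos n
  have h1q : (Nat.card {v : List ℕ // (∀ p ∈ v, 0 < p) ∧ ¬ c <+: v ∧ v.sum = n} : ℚ)
      + (Nat.card {l : List ℕ // (∀ p ∈ l, 0 < p) ∧ c <+: l ∧ l.sum = n} : ℚ)
      = (cc n : ℚ) := by exact_mod_cast congrArg (Nat.cast : ℕ → ℚ) h1
  have h2q : (Nat.card {l : List ℕ // (∀ p ∈ l, 0 < p) ∧ c <+: l ∧ l.sum = n} : ℚ)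
      = if c.sum ≤ n then (cc (n - c.sum) : ℚ) else 0 := by
    rw [h2]; split_ifs <;> simp
  rw [h2q] at h1q
  linarith

lemma hM (c : List ℕ) (k : ℕ) :
    PowerSeries.mk (fun n => (markedRunCount c k n : ℚ))
      = X ^ (k * c.sum)
        * ((PowerSeries.mk fun n =>
            (Nat.card {u : List ℕ // (∀ p ∈ u, 0 < p) ∧ ¬ c <:+ u ∧ u.sum = n} : ℚ))
        * (PowerSeries.mk fun n =>
            (Nat.card {v : List ℕ // (∀ p ∈ v, 0 < p) ∧ ¬ c <+: v ∧ v.sum = n} : ℚ))) := by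
  ext n
  rw [coeff_mk, coeff_X_pow_mul', conv_count]
  split_ifs with h
  · rw [coeff_mul, Nat.cast_sum]
    refine Finset.sum_congr rfl fun ij _ => ?_
    rw [coeff_mk, coeff_mk]
    push_cast
    ring
  · exact Nat.cast_zero

end MarkedRunAux

open MarkedRunAux in
/-- For a fixed composition `c` of total size `s = |c|`, the generating function
of compositions with a marked run of exactly `k` consecutive copies of `c` is
`F(z) = (1-z)^2 (1-z^s)^2 z^{ks} (1-2z)^{-2}`. -/
theorem marked_run_gf (c : List ℕ) (hc : c ≠ []) (hpos : ∀ p ∈ c, 0 < p) (k : ℕ) :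
    PowerSeries.mk (fun n => (markedRunCount c k n : ℚ)) * (1 - 2 * X) ^ 2
      = (1 - X) ^ 2 * (1 - X ^ c.sum) ^ 2 * X ^ (k * c.sum) := by
  have h1 := hM c k
  have h2 := hA c hpos
  have h3 := hB c hpos
  have h4 := hP
  calc PowerSeries.mk (fun n => (markedRunCount c k n : ℚ)) * (1 - 2 * X) ^ 2
      = X ^ (k * c.sum) * (1 - X ^ c.sum) ^ 2
          * (((PowerSeries.mk fun n => (cc n : ℚ)) * (1 - 2 * X)) ^ 2) := by
        rw [h1, h2, h3]; ring
    _ = (1 - X) ^ 2 * (1 - X ^ c.sum) ^ 2 * X ^ (k * c.sum) := by rw [h4]; ring
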